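/- Let S be a scope⁺-delimiting strategy for the decomposition ARS of infinite λ-terms such that the set of S-generated subterms of M is finite. Then the bottom-up construction of a derivation for ()M, which extends assumptions by the rule instance corresponding to the unique S-step (or S-steps, for applications) and stops extending an assumption as soon as an admissible repetition occurs below it (an earlier occurrence of the same sequent on the thread to the conclusion such that all intermediate sequents have prefix length ≥ that of the repeated sequent), terminates after finitely many extension steps. -/

import Mathlib

/-- Node labels of (nameless, de Bruijn) infinite λ-terms. -/
inductive Lab : Type
  | lam : Lab
  | app : Lab
  | var : ℕ → Lab
deriving DecidableEq

/-- Which child positions a node with a given label may have. -/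
def okChild : Lab → Bool → Prop
  | .lam, false => True
  | .app, _ => True
  | _, _ => False

/-- Infinite λ-terms (in nameless de Bruijn style), represented as
labelled possibly-infinite binary trees given by their labelling function. -/
structure Tm : Type where
  lab : List Bool → Option Lab
  root : (lab []).isSome
  cons : ∀ p b, (lab (p ++ [b])).isSome ↔ ∃ l, lab p = some l ∧ okChild l b

namespace Tm

/-- Subterm at a position. -/
def sub (t : Tm) (p : List Bool) (h : (t.lab p).isSome) : Tm where
  lab q := t.lab (p ++ q)
  root := by simpa using h
  cons q b := by
    have h' := t.cons (p ++ q) b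
    simpa [List.append_assoc] using h'

/-- Auxiliary: number of λ-labels strictly above, accumulating the prefix. -/
def ldepthAux (t : Tm) : List Bool → List Bool → ℕ
  | _, [] => 0
  | pre, b :: p => (if t.lab pre = some .lam then 1 else 0) + t.ldepthAux (pre ++ [b]) p

/-- The number of λ-nodes strictly above position `p` in `t`. -/
def ldepth (t : Tm) (p : List Bool) : ℕ := t.ldepthAux [] p

end Tm

def shiftLab (σ : ℕ → ℕ) : Lab → Lab
  | .var k => .var (σ k)
  | l => l

theorem okChild_shiftLab (σ : ℕ → ℕ) (l : Lab) (b : Bool) :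
    okChild (shiftLab σ l) b ↔ okChild l b := by
  cases l <;> cases b <;> simp [shiftLab, okChild]

/-- Relabel all variable nodes, depending on their λ-depth. -/
def Tm.mapVar (t : Tm) (σ : ℕ → ℕ → ℕ) : Tm where
  lab p := (t.lab p).map (shiftLab (σ (t.ldepth p)))
  root := by
    have h := t.root
    cases hl : t.lab [] with
    | none => rw [hl] at h; simp at h
    | some l => simp [hl]
  cons p b := by
    constructor
    · intro hs
      have hs' : (t.lab (p ++ [b])).isSome := by simpa using hs
      obtain ⟨l', hl', hok⟩ := (t.cons p b).1 hs'
      exact ⟨shiftLab (σ (t.ldepth p)) l', by simp [hl'],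
        (okChild_shiftLab _ _ _).2 hok⟩
    · rintro ⟨l', hl', hok⟩
      obtain ⟨l, hl, hfl⟩ := Option.map_eq_some_iff.mp (by simpa using hl')
      have hok' : okChild l b := by
        have := hfl ▸ hok
        exact (okChild_shiftLab (σ (t.ldepth p)) l b).1 this
      have hs : (t.lab (p ++ [b])).isSome := (t.cons p b).2 ⟨l, hl, hok'⟩
      simpa using hs

/-- The term consisting of a single variable node with index 0. -/
def var0Tm : Tm where
  lab p := if p = [] then some (.var 0) else none
  root := by simp
  cons p b := by
    constructor
    · intro h
      simp only [List.append_eq_nil_iff] at h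
      simp at h
    · rintro ⟨l, hl, hok⟩
      by_cases hp : p = []
      · subst hp
        simp only [if_pos rfl, Option.some.injEq] at hl
        cases hl
        cases b <;> simp [okChild] at hok
      · simp [hp] at hl

/-- The last-but-`j` abstraction-prefix variable occurs in `t`
(at λ-depth `d` inside the term it has de Bruijn index `j + d`). -/
def OccursJ (j : ℕ) (t : Tm) : Prop := ∃ p, t.lab p = some (.var (j + t.ldepth p))

/-- Remove the prefix variable with base index `j` from the de Bruijn indexing. -/
def downJ (j : ℕ) (t : Tm) : Tm := t.mapVar (fun d k => if j + d < k then k - 1 else k)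

/-- The last abstraction-prefix variable occurs. -/
def occurs0 : Tm → Prop := OccursJ 0

/-- Remove the (vacuous) last abstraction-prefix variable. -/
def down0 : Tm → Tm := downJ 0

/-- `t` has no free variables pointing outside the term itself. -/
def ClosedTm (t : Tm) : Prop := ∀ p k, t.lab p = some (.var k) → k < t.ldepth p

/-- Sequents: a prefix length together with an infinite λ-term. -/
abbrev TSeq : Type := ℕ × Tm

/-- λ-decomposition step of the ARS `Reg⁺`. -/
def SLam (s s' : TSeq) : Prop :=
  s.2.lab [] = some .lam ∧ s'.1 = s.1 + 1 ∧
    ∃ h : (s.2.lab [false]).isSome, s'.2 = s.2.sub [false] h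

/-- Left application-decomposition step. -/
def SApp0 (s s' : TSeq) : Prop :=
  s.2.lab [] = some .app ∧ s'.1 = s.1 ∧
    ∃ h : (s.2.lab [false]).isSome, s'.2 = s.2.sub [false] h

/-- Right application-decomposition step. -/
def SApp1 (s s' : TSeq) : Prop :=
  s.2.lab [] = some .app ∧ s'.1 = s.1 ∧
    ∃ h : (s.2.lab [true]).isSome, s'.2 = s.2.sub [true] h

/-- Vacuous-prefix removal step (removal of the last prefix variable). -/
def SDel (s s' : TSeq) : Prop :=
  s.1 = s'.1 + 1 ∧ ¬ occurs0 s.2 ∧ s'.2 = down0 s.2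

/-- The scope⁺-decomposition ARS `Reg⁺` on prefixed infinite λ-terms. -/
def Step (s s' : TSeq) : Prop := SLam s s' ∨ SApp0 s s' ∨ SApp1 s s' ∨ SDel s s'

/-- A (scope⁺-delimiting) strategy for the ARS `Reg⁺`: a sub-ARS with the
same objects and the same normal forms. -/
def Strategy (S : TSeq → TSeq → Prop) : Prop :=
  (∀ a b, S a b → Step a b) ∧ (∀ a, (∃ b, Step a b) → ∃ b, S a b)

/-- An infinite λ-term is strongly regular if some scope⁺-delimiting strategy
reaches only finitely many sequents from it. -/
def StronglyRegular (M : Tm) : Prop :=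
  ∃ S : TSeq → TSeq → Prop, Strategy S ∧ {s | Relation.ReflTransGen S (0, M) s}.Finite

/-- A list of sequents contains an *admissible repetition*: two equal entries
such that all entries in between have abstraction prefix at least as long as
the repeated one. -/
def HasAdmRep (l : List TSeq) : Prop :=
  ∃ i j : Fin l.length, i < j ∧ l.get i = l.get j ∧
    ∀ k : Fin l.length, i ≤ k → k ≤ j → (l.get i).1 ≤ (l.get k).1


/-! ### Auxiliary machinery for the proof of Statement 9 -/

/-- A convenient "split" form of admissible repetition. -/
def AdmRep' (l : List TSeq) : Prop :=
  ∃ x l₁ l₂ l₃, l = l₁ ++ x :: (l₂ ++ x :: l₃) ∧ ∀ y ∈ l₂, x.1 ≤ y.1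

lemma aux_mid_getElem (x : TSeq) (l₂ l₃ : List TSeq) (d : ℕ)
    (hd : d ≤ l₂.length + 1) (hlt : d < (x :: (l₂ ++ x :: l₃)).length) :
    (x :: (l₂ ++ x :: l₃))[d] = x ∨ (x :: (l₂ ++ x :: l₃))[d] ∈ l₂ := by
  match d with
  | 0 => left; rfl
  | (e+1) =>
    rw [List.getElem_cons_succ]
    by_cases he : e < l₂.length
    · right
      rw [List.getElem_append_left he]
      exact List.getElem_mem _
    · left
      have he' : e = l₂.length := by omega
      subst he'
      rw [List.getElem_append_right (le_refl _)]
      simp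

lemma AdmRep'.hasAdmRep {l : List TSeq} (h : AdmRep' l) : HasAdmRep l := by
  obtain ⟨x, l₁, l₂, l₃, rfl, hmid⟩ := h
  have hlen : (l₁ ++ x :: (l₂ ++ x :: l₃)).length
      = l₁.length + l₂.length + l₃.length + 2 := by
    simp; omega
  have hi : l₁.length < (l₁ ++ x :: (l₂ ++ x :: l₃)).length := by omega
  have hj : l₁.length + l₂.length + 1 < (l₁ ++ x :: (l₂ ++ x :: l₃)).length := by omega
  have geti : (l₁ ++ x :: (l₂ ++ x :: l₃))[l₁.length] = x := by
    rw [List.getElem_append_right (le_refl _)]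
    simp
  have getj : (l₁ ++ x :: (l₂ ++ x :: l₃))[l₁.length + l₂.length + 1]'hj = x := by
    rw [List.getElem_append_right (by omega : l₁.length ≤ l₁.length + l₂.length + 1)]
    have h1 : l₁.length + l₂.length + 1 - l₁.length = l₂.length + 1 := by omega
    simp only [h1, List.getElem_cons_succ]
    rw [List.getElem_append_right (le_refl _)]
    simp
  refine ⟨⟨l₁.length, hi⟩, ⟨l₁.length + l₂.length + 1, hj⟩, by simp [Fin.mk_lt_mk], ?_, ?_⟩
  · simp only [List.get_eq_getElem, geti, getj]
  · intro k hik hkj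
    have hk1 : l₁.length ≤ (k : ℕ) := hik
    have hk2 : (k : ℕ) ≤ l₁.length + l₂.length + 1 := hkj
    simp only [List.get_eq_getElem, geti]
    have hgk : (l₁ ++ x :: (l₂ ++ x :: l₃))[(k : ℕ)]'k.isLt = x ∨
        (l₁ ++ x :: (l₂ ++ x :: l₃))[(k : ℕ)]'k.isLt ∈ l₂ := by
      rw [List.getElem_append_right hk1]
      exact aux_mid_getElem x l₂ l₃ _ (by omega) _
    rcases hgk with hgk | hgk
    · rw [hgk]
    · exact hmid _ hgk

lemma admRep'_of_infix {l' l : List TSeq} (h : l' <:+: l) (ha : AdmRep' l') : AdmRep' l := by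
  obtain ⟨u, v, rfl⟩ := h
  obtain ⟨x, l₁, l₂, l₃, rfl, hmid⟩ := ha
  exact ⟨x, u ++ l₁, l₂, l₃ ++ v, by simp, hmid⟩

lemma pair_sublist_split {x : TSeq} : ∀ {l : List TSeq}, [x, x].Sublist l →
    ∃ l₁ l₂ l₃, l = l₁ ++ x :: (l₂ ++ x :: l₃) := by
  intro l
  induction l with
  | nil => intro h; simp at h
  | cons a l ih =>
    intro h
    cases h with
    | cons _ h' =>
      obtain ⟨l₁, l₂, l₃, rfl⟩ := ih h'
      exact ⟨a :: l₁, l₂, l₃, rfl⟩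
    | cons_cons _ h' =>
      have hx : x ∈ l := h'.subset (by simp)
      obtain ⟨s, t, rfl⟩ := List.append_of_mem hx
      exact ⟨[], s, t, by simp⟩

lemma countP_level_le (R : Finset TSeq) (m : ℕ) (l : List TSeq)
    (hR : ∀ y ∈ l, y ∈ R) (hm : ∀ y ∈ l, m ≤ y.1) (hna : ¬ AdmRep' l) :
    l.countP (fun y => decide (y.1 = m)) ≤ R.card := by
  classical
  set p : TSeq → Bool := fun y => decide (y.1 = m) with hp
  have hnd : (l.filter p).Nodup := by
    by_contra hnd
    obtain ⟨x, hdup⟩ := List.exists_duplicate_iff_not_nodup.2 hnd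
    have hsub : [x, x].Sublist l :=
      (List.duplicate_iff_sublist.1 hdup).trans List.filter_sublist
    have hxm : x.1 = m := by
      have hx : x ∈ l.filter p := hdup.mem
      have := List.of_mem_filter hx
      simpa [hp] using this
    obtain ⟨l₁, l₂, l₃, rfl⟩ := pair_sublist_split hsub
    exact hna ⟨x, l₁, l₂, l₃, rfl, fun y hy => by
      rw [hxm]
      exact hm y (by simp [hy])⟩
  rw [List.countP_eq_length_filter, ← List.toFinset_card_of_nodup hnd]
  apply Finset.card_le_card
  intro y hy
  rw [List.mem_toFinset] at hy
  exact hR y (List.mem_of_mem_filter hy)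

lemma split_length_le (p : TSeq → Bool) (L : List TSeq) (b : ℕ)
    (hb : ∀ l, l <:+: L → (∀ x ∈ l, ¬ p x) → l.length ≤ b) :
    ∀ (c : ℕ) (l : List TSeq), l <:+: L → l.countP p ≤ c →
      l.length ≤ b + c * (b + 1) := by
  intro c
  induction c with
  | zero =>
    intro l hinf hc
    have hnp : ∀ x ∈ l, ¬ p x := by
      intro x hx hpx
      have : 0 < l.countP p := List.countP_pos_iff.2 ⟨x, hx, hpx⟩
      omega
    simpa using hb l hinf hnp
  | succ c ih =>
    intro l hinf hc
    rcases hdw : l.dropWhile (fun y => !p y) with _ | ⟨x, l₂⟩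
    · have hl : l.takeWhile (fun y => !p y) = l := by
        have : l.takeWhile (fun y => !p y) ++ l.dropWhile (fun y => !p y) = l := List.takeWhile_append_dropWhile
        rw [hdw] at this
        simpa using this
      have hnp : ∀ x ∈ l, ¬ p x := by
        intro x hx hpx
        rw [← hl] at hx
        have := List.mem_takeWhile_imp hx
        simp [hpx] at this
      calc l.length ≤ b := hb l hinf hnp
        _ ≤ b + (c + 1) * (b + 1) := Nat.le_add_right _ _
    · set l₁ := l.takeWhile (fun y => !p y) with hl₁
      have hsplit : l₁ ++ x :: l₂ = l := by
        rw [hl₁, ← hdw]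
        exact List.takeWhile_append_dropWhile
      have hpx : p x = true := by
        have hne : l.dropWhile (fun y => !p y) ≠ [] := by rw [hdw]; simp
        have := List.head_dropWhile_not (fun y => !p y) hne
        have hhead : (l.dropWhile (fun y => !p y)).head hne = x := by
          simp [hdw]
        rw [hhead] at this
        simpa using this
      have hnp₁ : ∀ y ∈ l₁, ¬ p y := by
        intro y hy hpy
        have := List.mem_takeWhile_imp hy
        simp [hpy] at this
      have hinf₁ : l₁ <:+: L :=
        ((hsplit ▸ (List.prefix_append l₁ (x :: l₂)) : l₁ <+: l)).isInfix.trans hinf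
      have hinf₂ : l₂ <:+: L := by
        refine List.IsInfix.trans ?_ hinf
        exact ⟨l₁ ++ [x], [], by simp [← hsplit]⟩
      have hcount : l₂.countP p ≤ c := by
        have h0 : l₁.countP p = 0 := by
          rw [List.countP_eq_zero]
          intro y hy
          simpa using hnp₁ y hy
        have : l.countP p = l₁.countP p + (x :: l₂).countP p := by
          rw [← hsplit, List.countP_append]
        rw [h0, List.countP_cons_of_pos hpx] at this
        omega
      have hlen₁ : l₁.length ≤ b := hb l₁ hinf₁ hnp₁
      have hlen₂ : l₂.length ≤ b + c * (b + 1) := ih l₂ hinf₂ hcount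
      have hlen : l.length = l₁.length + 1 + l₂.length := by
        rw [← hsplit]; simp; omega
      rw [Nat.succ_mul]
      omega

/-- The recursive length bound. -/
def Fb (n : ℕ) : ℕ → ℕ
  | 0 => 0
  | d + 1 => Fb n d + n * (Fb n d + 1)

lemma main_bound (R : Finset TSeq) (B : ℕ) (hB : ∀ x ∈ R, x.1 ≤ B) :
    ∀ (d : ℕ) (l : List TSeq), (∀ x ∈ l, x ∈ R) → (∀ x ∈ l, B < x.1 + d) →
      ¬ AdmRep' l → l.length ≤ Fb R.card d := by
  intro d
  induction d with
  | zero =>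
    intro l hR hd _
    have hnil : l = [] := by
      rw [List.eq_nil_iff_forall_not_mem]
      intro x hx
      have h1 := hB x (hR x hx)
      have h2 := hd x hx
      omega
    simp [hnil, Fb]
  | succ d ih =>
    intro l hR hd hna
    set p : TSeq → Bool := fun y => decide (y.1 + d ≤ B) with hp
    have hb : ∀ l', l' <:+: l → (∀ x ∈ l', ¬ p x) → l'.length ≤ Fb R.card d := by
      intro l' hinf hnp
      refine ih l' (fun x hx => hR x (hinf.subset hx)) ?_
        (fun ha => hna (admRep'_of_infix hinf ha))
      intro x hx
      have := hnp x hx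
      simp [hp] at this
      omega
    have hcount : l.countP p ≤ R.card := by
      by_cases hdB : d ≤ B
      case neg =>
        have : l.countP p = 0 := by
          rw [List.countP_eq_zero]
          intro y _
          simp only [hp, decide_eq_true_eq]
          omega
        omega
      have hcongr : l.countP p = l.countP (fun y => decide (y.1 = B - d)) := by
        apply List.countP_congr
        intro x hx
        have := hd x hx
        simp only [hp, decide_eq_true_eq, decide_eq_decide]
        omega
      rw [hcongr]
      exact countP_level_le R (B - d) l hR
        (fun y hy => by have := hd y hy; omega) hna
    have := split_length_le p l (Fb R.card d) hb R.card l (List.infix_rfl) hcount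
    simpa [Fb] using this

lemma chain_reach {S : TSeq → TSeq → Prop} :
    ∀ (l : List TSeq) (a : TSeq), List.Chain S a l →
      ∀ x ∈ l, Relation.ReflTransGen S a x := by
  intro l
  induction l with
  | nil => intro a _ x hx; simp at hx
  | cons b l ih =>
    intro a hc x hx
    rw [List.Chain, List.chain_cons] at hc
    rcases List.mem_cons.1 hx with rfl | hx'
    · exact Relation.ReflTransGen.single hc.1
    · exact (Relation.ReflTransGen.single hc.1).trans (ih b hc.2 x hx')


/-- Let `S` be a scope⁺-delimiting strategy whose set of
reachable sequents from `() M` is finite.  Then the bottom-up construction of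
a `Reg₀⁺`-derivation for `() M`, which extends each open assumption by the
rule instance corresponding to an `S`-step and stops a thread as soon as an
admissible repetition occurs on it, terminates: there are only finitely many
finite `S`-rewrite sequences from `() M` without an admissible repetition
(these are exactly the threads along which the construction keeps extending). -/
theorem stmt9 (M : Tm) (hM : ClosedTm M) (S : TSeq → TSeq → Prop) (hS : Strategy S)
    (hfin : {s | Relation.ReflTransGen S ((0 : ℕ), M) s}.Finite) :
    {l : List TSeq | List.Chain S ((0 : ℕ), M) l ∧
      ¬ HasAdmRep (((0 : ℕ), M) :: l)}.Finite := by
  classical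
  set R : Finset TSeq := hfin.toFinset with hRdef
  set B : ℕ := R.sup Prod.fst with hBdef
  have hB : ∀ x ∈ R, x.1 ≤ B := fun x hx => Finset.le_sup (f := Prod.fst) hx
  set N : ℕ := Fb R.card (B + 1) with hN
  have hsub : {l : List TSeq | List.Chain S ((0 : ℕ), M) l ∧
      ¬ HasAdmRep (((0 : ℕ), M) :: l)} ⊆
      (List.map (Subtype.val : {x // x ∈ R} → TSeq)) ''
        {l : List {x // x ∈ R} | l.length ≤ N} := by
    intro l hl
    obtain ⟨hchain, hna⟩ := hl
    have hmem : ∀ x ∈ ((0 : ℕ), M) :: l, x ∈ R := by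
      intro x hx
      rw [hRdef, Set.Finite.mem_toFinset]
      rcases List.mem_cons.1 hx with rfl | hx'
      · exact Relation.ReflTransGen.refl
      · exact chain_reach l _ hchain x hx'
    have hna' : ¬ AdmRep' (((0 : ℕ), M) :: l) := fun h => hna h.hasAdmRep
    have hlen : (((0 : ℕ), M) :: l).length ≤ N :=
      main_bound R B hB (B + 1) _ hmem (fun x hx => by omega) hna'
    have hlen' : l.length ≤ N := by
      simp only [List.length_cons] at hlen
      omega
    refine ⟨l.pmap (fun x h => ⟨x, h⟩)
      (fun x hx => hmem x (List.mem_cons_of_mem _ hx)), ?_, ?_⟩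
    · simpa [List.length_pmap] using hlen'
    · simp [List.map_pmap]
  exact Set.Finite.subset (Set.Finite.image _ (List.finite_length_le _ N)) hsub
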